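/- For every k ≥ 1, every r ≤ k, and every vertex v of the generation U_r, the degree of v in the Apollonian network G_k equals 3·2^(k-r) if r > 1, and equals 2^(k-1) + 1 if r = 1. -/

import Mathlib

/-- A family of Apollonian networks, given by a vertex set `Vert` together with a
generation labeling `gen` and an adjacency relation `adj`, satisfying the recursive
construction: the first generation `U₁` consists of three pairwise adjacent vertices
(forming `G₁`); and for each `k ≥ 1`, for each vertex `u` of generation `k` and each
adjacent pair `{x, y}` of neighbors of `u` in `G_k`, exactly one new vertex of
generation `k + 1` is created, adjacent to exactly `u`, `x`, and `y`.
The `k`-th Apollonian network `G_k` is the induced subgraph on the vertices of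
generation at most `k`. -/
structure ApollonianNetwork where
  Vert : Type
  adj : Vert → Vert → Prop
  adj_symm : ∀ a b, adj a b → adj b a
  adj_irrefl : ∀ a, ¬ adj a a
  gen : Vert → ℕ
  gen_pos : ∀ v, 1 ≤ gen v
  /-- The first generation consists of exactly three vertices. -/
  U1_card : ∃ a b c : Vert, a ≠ b ∧ a ≠ c ∧ b ≠ c ∧ {v | gen v = 1} = {a, b, c}
  /-- `G₁` is a complete graph on the first generation. -/
  U1_complete : ∀ a b, gen a = 1 → gen b = 1 → a ≠ b → adj a b
  /-- All edges join vertices of distinct generations, except within generation 1. -/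
  adj_gen : ∀ a b, adj a b → gen a = gen b → gen a = 1
  /-- Every vertex `v` of generation `k ≥ 2` is adjacent, among the vertices of earlier
  generations, to exactly three vertices `u`, `x`, `y`, where `u` has generation `k - 1`
  and `x`, `y` are neighbors of `u` in `G_{k-1}` that are adjacent to each other. -/
  created : ∀ v, 2 ≤ gen v → ∃ u x y,
    gen u = gen v - 1 ∧ gen x ≤ gen v - 1 ∧ gen y ≤ gen v - 1 ∧
    adj u x ∧ adj u y ∧ adj x y ∧
    {w | adj v w ∧ gen w < gen v} = {u, x, y}
  /-- For each `k ≥ 1`, each vertex `u` of generation `k`, and each adjacent pair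
  `{x, y}` of neighbors of `u` in `G_k`, there is exactly one vertex of generation
  `k + 1` whose neighbors in `G_{k+1}` are exactly `u`, `x`, and `y`. -/
  attach : ∀ k, 1 ≤ k → ∀ u x y,
    gen u = k → gen x ≤ k → gen y ≤ k → x ≠ y →
    adj u x → adj u y → adj x y →
    ∃! v, gen v = k + 1 ∧ {w | adj v w ∧ gen w ≤ k} = ({u, x, y} : Set Vert)

/-- The `k`-th Apollonian network `G_k`: the induced subgraph on the vertices of
generation at most `k`. -/
def ApollonianNetwork.G (A : ApollonianNetwork) (k : ℕ) :
    SimpleGraph {v : A.Vert // A.gen v ≤ k} where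
  Adj a b := A.adj a b
  symm := ⟨fun a b h => A.adj_symm a b h⟩
  loopless := ⟨fun a h => A.adj_irrefl a h⟩

namespace ApollonianNetwork

variable {A : ApollonianNetwork}

lemma symm' {a b : A.Vert} (h : A.adj a b) : A.adj b a := A.adj_symm a b h

lemma ne_of_adj {a b : A.Vert} (h : A.adj a b) : a ≠ b :=
  fun e => A.adj_irrefl b (e ▸ h)

/-- Neighbors of `w` of generation exactly `m`. -/
def Neq (A : ApollonianNetwork) (w : A.Vert) (m : ℕ) : Set A.Vert :=
  {z | A.adj w z ∧ A.gen z = m}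

/-- Neighbors of `w` of generation at most `k`. -/
def Nle (A : ApollonianNetwork) (w : A.Vert) (k : ℕ) : Set A.Vert :=
  {z | A.adj w z ∧ A.gen z ≤ k}

lemma mem_Neq {w z : A.Vert} {m : ℕ} : z ∈ A.Neq w m ↔ A.adj w z ∧ A.gen z = m := Iff.rfl
lemma mem_Nle {w z : A.Vert} {k : ℕ} : z ∈ A.Nle w k ↔ A.adj w z ∧ A.gen z ≤ k := Iff.rfl

lemma tri_adj {p q s a b : A.Vert} (hpq : A.adj p q) (hps : A.adj p s) (hqs : A.adj q s)
    (ha : a ∈ ({p, q, s} : Set A.Vert)) (hb : b ∈ ({p, q, s} : Set A.Vert)) (hab : a ≠ b) :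
    A.adj a b := by
  simp only [Set.mem_insert_iff, Set.mem_singleton_iff] at ha hb
  rcases ha with rfl | rfl | rfl <;> rcases hb with rfl | rfl | rfl <;>
    first
      | exact absurd rfl hab
      | assumption
      | exact A.adj_symm _ _ (by assumption)

lemma downset_eq {v : A.Vert} {m : ℕ} (hv : A.gen v = m + 1) :
    {w | A.adj v w ∧ A.gen w < A.gen v} = A.Nle v m := by
  ext z
  simp only [Set.mem_setOf_eq, mem_Nle, hv, Nat.lt_succ_iff]

lemma created3 {v : A.Vert} {m : ℕ} (hm : 2 ≤ m) (hv : A.gen v = m + 1) :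
    ∃ u x y, A.gen u = m ∧ A.gen x < m ∧ A.gen y < m ∧
      A.adj u x ∧ A.adj u y ∧ A.adj x y ∧ A.Nle v m = {u, x, y} := by
  obtain ⟨u, x, y, hu, hx, hy, hux, huy, hxy, hD⟩ := A.created v (by omega)
  rw [hv] at hu hx hy
  simp only [Nat.add_sub_cancel] at hu hx hy
  have hx' : A.gen x < m := by
    rcases lt_or_eq_of_le hx with h | h
    · exact h
    · exact absurd (A.adj_gen u x hux (hu.trans h.symm)) (by omega)
  have hy' : A.gen y < m := by
    rcases lt_or_eq_of_le hy with h | h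
    · exact h
    · exact absurd (A.adj_gen u y huy (hu.trans h.symm)) (by omega)
  exact ⟨u, x, y, hu, hx', hy', hux, huy, hxy, (downset_eq hv).symm.trans hD⟩

/-- Generic counting lemma: a pairwise disjoint union of sets of size `c` indexed by a
finite set `S` has size `c * S.ncard`. -/
lemma biUnion_card_aux {α : Type*} (c : ℕ) (F : α → Set α) {S : Set α} (hS : S.Finite)
    (hfin : ∀ u ∈ S, (F u).Finite) (hcard : ∀ u ∈ S, (F u).ncard = c)
    (hdisj : ∀ u ∈ S, ∀ v ∈ S, u ≠ v → Disjoint (F u) (F v)) :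
    (⋃ u ∈ S, F u).Finite ∧ (⋃ u ∈ S, F u).ncard = c * S.ncard := by
  refine Set.Finite.induction_on
    (motive := fun s _ => (∀ u ∈ s, (F u).Finite) → (∀ u ∈ s, (F u).ncard = c) →
      (∀ u ∈ s, ∀ v ∈ s, u ≠ v → Disjoint (F u) (F v)) →
      (⋃ u ∈ s, F u).Finite ∧ (⋃ u ∈ s, F u).ncard = c * s.ncard)
    S hS (by simp) ?_ hfin hcard hdisj
  rintro a s has hsfin ih hfin' hcard' hdisj'
  obtain ⟨ihfin, ihcard⟩ := ih (fun u hu => hfin' u (Set.mem_insert_of_mem a hu))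
    (fun u hu => hcard' u (Set.mem_insert_of_mem a hu))
    (fun u hu v hv huv => hdisj' u (Set.mem_insert_of_mem a hu) v (Set.mem_insert_of_mem a hv) huv)
  have hUa : (⋃ u ∈ insert a s, F u) = F a ∪ ⋃ u ∈ s, F u := by
    simp [Set.biUnion_insert]
  have hafin : (F a).Finite := hfin' a (Set.mem_insert a s)
  have hdis : Disjoint (F a) (⋃ u ∈ s, F u) := by
    rw [Set.disjoint_iUnion₂_right]
    intro u hu
    exact hdisj' a (Set.mem_insert a s) u (Set.mem_insert_of_mem a hu)
      (fun e => has (e ▸ hu))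
  constructor
  · rw [hUa]; exact hafin.union ihfin
  · rw [hUa, Set.ncard_union_eq hdis hafin ihfin, ihcard,
      Set.ncard_insert_of_notMem has hsfin, hcard' a (Set.mem_insert a s)]
    ring

lemma gen_one_mem {w : A.Vert} {a b c : A.Vert} (hU : {v : A.Vert | A.gen v = 1} = {a, b, c})
    (hw : A.gen w = 1) : w ∈ ({a, b, c} : Set A.Vert) := by
  rw [← hU]; exact hw

lemma gen_one_of_mem {w : A.Vert} {a b c : A.Vert} (hU : {v : A.Vert | A.gen v = 1} = {a, b, c})
    (hw : w ∈ ({a, b, c} : Set A.Vert)) : A.gen w = 1 := by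
  have : w ∈ {v : A.Vert | A.gen v = 1} := hU ▸ hw
  exact this

/-- Count of same-generation neighbors of a first-generation vertex. -/
lemma neq_one_card {w : A.Vert} (hw : A.gen w = 1) :
    (A.Neq w 1).Finite ∧ (A.Neq w 1).ncard = 2 := by
  obtain ⟨a, b, c, hab, hac, hbc, hU⟩ := A.U1_card
  have hset : A.Neq w 1 = ({a, b, c} : Set A.Vert) \ {w} := by
    ext z
    simp only [mem_Neq, Set.mem_diff, Set.mem_singleton_iff]
    constructor
    · rintro ⟨hadj, hz⟩
      exact ⟨gen_one_mem hU hz, (ne_of_adj hadj).symm⟩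
    · rintro ⟨hz, hzw⟩
      exact ⟨A.U1_complete w z hw (gen_one_of_mem hU hz) (Ne.symm hzw), gen_one_of_mem hU hz⟩
  have habcfin : ({a, b, c} : Set A.Vert).Finite := Set.toFinite _
  have habc : ({a, b, c} : Set A.Vert).ncard = 3 :=
    Set.ncard_eq_three.mpr ⟨a, b, c, hab, hac, hbc, rfl⟩
  have hwmem : w ∈ ({a, b, c} : Set A.Vert) := gen_one_mem hU hw
  constructor
  · rw [hset]; exact habcfin.diff
  · rw [hset, Set.ncard_diff_singleton_of_mem hwmem, habc]

/-- Vertices of generation `m ≥ 2` have no same-generation neighbors. -/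
lemma neq_self_empty {w : A.Vert} {m : ℕ} (hm : 2 ≤ m) (hw : A.gen w = m) :
    A.Neq w m = ∅ := by
  ext z
  simp only [mem_Neq, Set.mem_empty_iff_false, iff_false, not_and]
  intro hz hzg
  have := A.adj_gen w z hz (hw.trans hzg.symm)
  omega

/-- A first-generation vertex has exactly one second-generation neighbor. -/
lemma neq_two_card {w : A.Vert} (hw : A.gen w = 1) :
    (A.Neq w 2).Finite ∧ (A.Neq w 2).ncard = 1 := by
  obtain ⟨a, b, c, hab, hac, hbc, hU⟩ := A.U1_card
  have hga : A.gen a = 1 := gen_one_of_mem hU (by simp)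
  have hgb : A.gen b = 1 := gen_one_of_mem hU (by simp)
  have hgc : A.gen c = 1 := gen_one_of_mem hU (by simp)
  obtain ⟨d, ⟨hd2, hdN⟩, hdu⟩ := A.attach 1 le_rfl a b c hga hgb.le hgc.le hbc
    (A.U1_complete a b hga hgb hab) (A.U1_complete a c hga hgc hac)
    (A.U1_complete b c hgb hgc hbc)
  have key : ∀ v : A.Vert, A.gen v = 2 → v = d := by
    intro v hv
    obtain ⟨u, x, y, hu, hx, hy, hux, huy, hxy, hD⟩ := A.created v (by omega)
    rw [hv] at hu hx hy
    norm_num at hu hx hy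
    have hgx : A.gen x = 1 := le_antisymm hx (A.gen_pos x)
    have hgy : A.gen y = 1 := le_antisymm hy (A.gen_pos y)
    have hNv : A.Nle v 1 = {u, x, y} := ((downset_eq (m := 1) hv).symm).trans hD
    have hsub : ({u, x, y} : Set A.Vert) ⊆ {a, b, c} := by
      rintro z (rfl | rfl | rfl)
      · exact gen_one_mem hU hu
      · exact gen_one_mem hU hgx
      · exact gen_one_mem hU hgy
    have heq : ({u, x, y} : Set A.Vert) = {a, b, c} := by
      apply Set.eq_of_subset_of_ncard_le hsub _ (Set.toFinite _)
      rw [Set.ncard_eq_three.mpr ⟨a, b, c, hab, hac, hbc, rfl⟩,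
        Set.ncard_eq_three.mpr ⟨u, x, y, ne_of_adj hux, ne_of_adj huy, ne_of_adj hxy, rfl⟩]
    exact hdu v ⟨hv, hNv.trans heq⟩
  have hset : A.Neq w 2 = {d} := by
    ext z
    simp only [mem_Neq, Set.mem_singleton_iff]
    constructor
    · rintro ⟨hadj, hz⟩; exact key z hz
    · intro hz
      rw [hz]
      refine ⟨symm' ?_, hd2⟩
      have hwmem : w ∈ {w' | A.adj d w' ∧ A.gen w' ≤ 1} := by
        rw [hdN]; exact gen_one_mem hU hw
      exact hwmem.1
  rw [hset]
  exact ⟨Set.finite_singleton d, Set.ncard_singleton d⟩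

lemma insert_pair_comm (w x y : A.Vert) : ({w, x, y} : Set A.Vert) = {w, y, x} := by
  ext t; simp only [Set.mem_insert_iff, Set.mem_singleton_iff]; tauto

/-- A vertex of generation `m ≥ 2` gains exactly three new neighbors of generation `m+1`. -/
lemma case_top {m : ℕ} (hm : 2 ≤ m) {w : A.Vert} (hw : A.gen w = m) :
    (A.Neq w (m + 1)).Finite ∧ (A.Neq w (m + 1)).ncard = 3 := by
  obtain ⟨p, q, s, hgp, hgq, hgs, hpq, hps, hqs, hD⟩ := A.created w (by omega)
  have hmemD : ∀ z ∈ ({p, q, s} : Set A.Vert), A.adj w z ∧ A.gen z < A.gen w := by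
    intro z hz
    have : z ∈ {z | A.adj w z ∧ A.gen z < A.gen w} := by rw [hD]; exact hz
    exact this
  obtain ⟨hwp, hgp'⟩ := hmemD p (by simp)
  obtain ⟨hwq, hgq'⟩ := hmemD q (by simp)
  obtain ⟨hws, hgs'⟩ := hmemD s (by simp)
  rw [hw] at hgp' hgq' hgs'
  have h1 := A.attach m (by omega) w p q hw hgp'.le hgq'.le (ne_of_adj hpq) hwp hwq hpq
  have h2 := A.attach m (by omega) w p s hw hgp'.le hgs'.le (ne_of_adj hps) hwp hws hps
  have h3 := A.attach m (by omega) w q s hw hgq'.le hgs'.le (ne_of_adj hqs) hwq hws hqs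
  obtain ⟨v1, ⟨hv1g, hv1N⟩, hv1u⟩ := h1
  obtain ⟨v2, ⟨hv2g, hv2N⟩, hv2u⟩ := h2
  obtain ⟨v3, ⟨hv3g, hv3N⟩, hv3u⟩ := h3
  have hset : A.Neq w (m + 1) = {v1, v2, v3} := by
    ext v
    simp only [mem_Neq, Set.mem_insert_iff, Set.mem_singleton_iff]
    constructor
    · rintro ⟨hadj, hgv⟩
      obtain ⟨u', x', y', hgu', hgx', hgy', hux', huy', hxy', hN⟩ := created3 hm hgv
      have hwmem : w ∈ A.Nle v m := ⟨symm' hadj, by omega⟩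
      rw [hN] at hwmem
      have hwu : w = u' := by
        rcases hwmem with rfl | rfl | rfl
        · rfl
        · omega
        · omega
      subst hwu
      have hx'D : x' ∈ ({p, q, s} : Set A.Vert) := by
        rw [← hD]; exact ⟨hux', by omega⟩
      have hy'D : y' ∈ ({p, q, s} : Set A.Vert) := by
        rw [← hD]; exact ⟨huy', by omega⟩
      have hNv : A.Nle v m = {w, x', y'} := hN
      simp only [Set.mem_insert_iff, Set.mem_singleton_iff] at hx'D hy'D
      have hx'y' : x' ≠ y' := ne_of_adj hxy'
      rcases hx'D with e1 | e1 | e1 <;> rcases hy'D with e2 | e2 | e2 <;>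
        rw [e1, e2] at hNv
      · exact absurd (e1.trans e2.symm) hx'y'
      · exact Or.inl (hv1u v ⟨hgv, hNv⟩)
      · exact Or.inr (Or.inl (hv2u v ⟨hgv, hNv⟩))
      · rw [insert_pair_comm w q p] at hNv
        exact Or.inl (hv1u v ⟨hgv, hNv⟩)
      · exact absurd (e1.trans e2.symm) hx'y'
      · exact Or.inr (Or.inr (hv3u v ⟨hgv, hNv⟩))
      · rw [insert_pair_comm w s p] at hNv
        exact Or.inr (Or.inl (hv2u v ⟨hgv, hNv⟩))
      · rw [insert_pair_comm w s q] at hNv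
        exact Or.inr (Or.inr (hv3u v ⟨hgv, hNv⟩))
      · exact absurd (e1.trans e2.symm) hx'y'
    · have hback : ∀ (v' : A.Vert) (x y : A.Vert), A.gen v' = m + 1 →
          ({z | A.adj v' z ∧ A.gen z ≤ m} : Set A.Vert) = {w, x, y} →
          A.adj w v' ∧ A.gen v' = m + 1 := by
        intro v' x y hg hNv
        refine ⟨symm' ?_, hg⟩
        have : w ∈ {z | A.adj v' z ∧ A.gen z ≤ m} := by rw [hNv]; simp
        exact this.1
      rintro (rfl | rfl | rfl)
      · exact hback v p q hv1g hv1N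
      · exact hback v p s hv2g hv2N
      · exact hback v q s hv3g hv3N
  have hsne : ∀ z ∈ ({w, p, q} : Set A.Vert), s ≠ z := by
    rintro z (rfl | rfl | rfl)
    · exact (ne_of_adj hws).symm
    · exact (ne_of_adj hps).symm
    · exact (ne_of_adj hqs).symm
  have h12 : v1 ≠ v2 := by
    intro e
    have : ({w, p, q} : Set A.Vert) = {w, p, s} := hv1N.symm.trans (e ▸ hv2N)
    have hs : s ∈ ({w, p, q} : Set A.Vert) := by rw [this]; simp
    exact hsne s hs rfl
  have h13 : v1 ≠ v3 := by
    intro e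
    have : ({w, p, q} : Set A.Vert) = {w, q, s} := hv1N.symm.trans (e ▸ hv3N)
    have hs : s ∈ ({w, p, q} : Set A.Vert) := by rw [this]; simp
    exact hsne s hs rfl
  have h23 : v2 ≠ v3 := by
    intro e
    have : ({w, p, s} : Set A.Vert) = {w, q, s} := hv2N.symm.trans (e ▸ hv3N)
    have hq : q ∈ ({w, p, s} : Set A.Vert) := by rw [this]; simp
    rcases hq with rfl | rfl | rfl
    · exact ne_of_adj hwq rfl
    · exact ne_of_adj hpq rfl
    · exact ne_of_adj hqs rfl
  rw [hset]
  exact ⟨Set.toFinite _, Set.ncard_eq_three.mpr ⟨v1, v2, v3, h12, h13, h23, rfl⟩⟩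

lemma pair_count {m : ℕ} (hm : 2 ≤ m) {w u q s : A.Vert} (hw : A.gen w < m)
    (hgu : A.gen u = m) (hgq : A.gen q < m) (hgs : A.gen s < m)
    (hwu : A.adj w u) (hwq : A.adj w q) (hws : A.adj w s)
    (huq : A.adj u q) (hus : A.adj u s) (hqs : A.adj q s)
    (hDu : {z | A.adj u z ∧ A.gen z < A.gen u} = {w, q, s}) :
    ({v | A.adj w v ∧ A.gen v = m + 1 ∧ A.adj v u} : Set A.Vert).Finite ∧
    ({v | A.adj w v ∧ A.gen v = m + 1 ∧ A.adj v u} : Set A.Vert).ncard = 2 := by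
  have hq := A.attach m (by omega) u w q hgu hw.le hgq.le (ne_of_adj hwq) (symm' hwu) huq hwq
  have hs := A.attach m (by omega) u w s hgu hw.le hgs.le (ne_of_adj hws) (symm' hwu) hus hws
  obtain ⟨vq, ⟨hvqg, hvqN⟩, hvqu⟩ := hq
  obtain ⟨vs, ⟨hvsg, hvsN⟩, hvsu⟩ := hs
  have hback : ∀ (v' z : A.Vert), A.gen v' = m + 1 →
      ({z' | A.adj v' z' ∧ A.gen z' ≤ m} : Set A.Vert) = {u, w, z} →
      A.adj w v' ∧ A.gen v' = m + 1 ∧ A.adj v' u := by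
    intro v' z hg hNv
    have hwmem : w ∈ {z' | A.adj v' z' ∧ A.gen z' ≤ m} := by rw [hNv]; simp
    have humem : u ∈ {z' | A.adj v' z' ∧ A.gen z' ≤ m} := by rw [hNv]; simp
    exact ⟨symm' hwmem.1, hg, humem.1⟩
  have hset : ({v | A.adj w v ∧ A.gen v = m + 1 ∧ A.adj v u} : Set A.Vert) = {vq, vs} := by
    ext v
    simp only [Set.mem_setOf_eq, Set.mem_insert_iff, Set.mem_singleton_iff]
    constructor
    · rintro ⟨hwv, hgv, hvu⟩
      obtain ⟨u', x', y', hgu', hgx', hgy', hux', huy', hxy', hN⟩ := created3 hm hgv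
      have humem : u ∈ A.Nle v m := ⟨hvu, by omega⟩
      rw [hN] at humem
      have huu' : u = u' := by
        rcases humem with rfl | rfl | rfl
        · rfl
        · omega
        · omega
      subst huu'
      have hwmem : w ∈ A.Nle v m := ⟨symm' hwv, by omega⟩
      rw [hN] at hwmem
      have hwxy : w = x' ∨ w = y' := by
        rcases hwmem with rfl | h | h
        · omega
        · exact Or.inl h
        · exact Or.inr h
      rcases hwxy with ew | ew
      · -- w = x', third vertex is y'
        have hy'mem : y' ∈ ({w, q, s} : Set A.Vert) := by
          rw [← hDu]; exact ⟨huy', by omega⟩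
        have hy'w : y' ≠ w := by rw [ew]; exact (ne_of_adj hxy').symm
        simp only [Set.mem_insert_iff, Set.mem_singleton_iff] at hy'mem
        rcases hy'mem with e | e | e
        · exact absurd e hy'w
        · left
          apply hvqu v
          rw [← ew, e] at hN
          exact ⟨hgv, hN⟩
        · right
          apply hvsu v
          rw [← ew, e] at hN
          exact ⟨hgv, hN⟩
      · -- w = y', third vertex is x'
        have hx'mem : x' ∈ ({w, q, s} : Set A.Vert) := by
          rw [← hDu]; exact ⟨hux', by omega⟩
        have hx'w : x' ≠ w := by rw [ew]; exact ne_of_adj hxy'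
        simp only [Set.mem_insert_iff, Set.mem_singleton_iff] at hx'mem
        rcases hx'mem with e | e | e
        · exact absurd e hx'w
        · left
          apply hvqu v
          rw [← ew, e, insert_pair_comm u q w] at hN
          exact ⟨hgv, hN⟩
        · right
          apply hvsu v
          rw [← ew, e, insert_pair_comm u s w] at hN
          exact ⟨hgv, hN⟩
    · rintro (rfl | rfl)
      · exact hback v q hvqg hvqN
      · exact hback v s hvsg hvsN
  have hne : vq ≠ vs := by
    intro e
    have : ({u, w, q} : Set A.Vert) = {u, w, s} := hvqN.symm.trans (e ▸ hvsN)
    have hsmem : s ∈ ({u, w, q} : Set A.Vert) := by rw [this]; simp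
    rcases hsmem with e' | e' | e'
    · exact ne_of_adj hus e'.symm
    · exact ne_of_adj hws e'.symm
    · exact ne_of_adj hqs e'.symm
  rw [hset]
  exact ⟨Set.toFinite _, Set.ncard_pair hne⟩

/-- A vertex of generation `< m` doubles its generation-`m` neighbor count at step `m+1`. -/
lemma case_low {m : ℕ} (hm : 2 ≤ m) {w : A.Vert} (hw : A.gen w < m)
    (hfin : (A.Neq w m).Finite) :
    (A.Neq w (m + 1)).Finite ∧ (A.Neq w (m + 1)).ncard = 2 * (A.Neq w m).ncard := by
  set F : A.Vert → Set A.Vert :=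
    fun u => {v | A.adj w v ∧ A.gen v = m + 1 ∧ A.adj v u} with hF
  have hCu : ∀ u ∈ A.Neq w m, (F u).Finite ∧ (F u).ncard = 2 := by
    rintro u ⟨hwu, hgu⟩
    obtain ⟨p, q, s, hgp, hgq, hgs, hpq, hps, hqs, hDu⟩ := A.created u (by omega)
    rw [hgu] at hDu
    have hmemD : ∀ z ∈ ({p, q, s} : Set A.Vert), A.adj u z ∧ A.gen z < m := by
      intro z hz
      have : z ∈ {z | A.adj u z ∧ A.gen z < m} := by rw [hDu]; exact hz
      exact this
    obtain ⟨hup, hgp'⟩ := hmemD p (by simp)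
    obtain ⟨huq, hgq'⟩ := hmemD q (by simp)
    obtain ⟨hus, hgs'⟩ := hmemD s (by simp)
    have hwD : w ∈ ({p, q, s} : Set A.Vert) := by
      rw [← hDu]; exact ⟨symm' hwu, hw⟩
    have hDu' : {z | A.adj u z ∧ A.gen z < A.gen u} = ({p, q, s} : Set A.Vert) := by
      rw [hgu]; exact hDu
    have htri : ∀ a b : A.Vert, a ∈ ({p, q, s} : Set A.Vert) →
        b ∈ ({p, q, s} : Set A.Vert) → a ≠ b → A.adj a b :=
      fun a b ha hb hab => tri_adj hpq hps hqs ha hb hab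
    rcases hwD with ew | ew | ew
    · -- w = p
      exact pair_count hm hw hgu hgq' hgs' hwu (ew.symm ▸ hpq) (ew.symm ▸ hps)
        huq hus hqs (ew.symm ▸ hDu')
    · -- w = q
      have hcomm : ({p, q, s} : Set A.Vert) = {q, p, s} := Set.insert_comm p q {s}
      rw [hcomm] at hDu'
      exact pair_count hm hw hgu hgp' hgs' hwu (ew.symm ▸ symm' hpq) (ew.symm ▸ hqs)
        hup hus hps (ew.symm ▸ hDu')
    · -- w = s
      have hcomm : ({p, q, s} : Set A.Vert) = {s, p, q} := by
        ext t; simp only [Set.mem_insert_iff, Set.mem_singleton_iff]; tauto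
      rw [hcomm] at hDu'
      exact pair_count hm hw hgu hgp' hgq' hwu (ew.symm ▸ symm' hps) (ew.symm ▸ symm' hqs)
        hup huq hpq (ew.symm ▸ hDu')
  have hUnion : A.Neq w (m + 1) = ⋃ u ∈ A.Neq w m, F u := by
    ext v
    simp only [mem_Neq, Set.mem_iUnion, exists_prop]
    constructor
    · rintro ⟨hwv, hgv⟩
      obtain ⟨u', x', y', hgu', hgx', hgy', hux', huy', hxy', hN⟩ := created3 hm hgv
      have hwmem : w ∈ A.Nle v m := ⟨symm' hwv, by omega⟩
      rw [hN] at hwmem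
      have hu'v : A.adj v u' := by
        have : u' ∈ A.Nle v m := by rw [hN]; simp
        exact this.1
      have hadjwu' : A.adj u' w := by
        rcases hwmem with h | h | h
        · exact absurd (h ▸ hgu') (by omega)
        · exact h ▸ hux'
        · exact h ▸ huy'
      exact ⟨u', ⟨symm' hadjwu', hgu'⟩, hwv, hgv, hu'v⟩
    · rintro ⟨u, hu, hwv, hgv, _⟩
      exact ⟨hwv, hgv⟩
  have hdisj : ∀ u ∈ A.Neq w m, ∀ u' ∈ A.Neq w m, u ≠ u' → Disjoint (F u) (F u') := by
    rintro u ⟨hwu, hgu⟩ u' ⟨hwu', hgu'⟩ huu'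
    rw [Set.disjoint_left]
    rintro v ⟨hwv, hgv, hvu⟩ ⟨_, _, hvu'⟩
    obtain ⟨t, x', y', hgt, hgx', hgy', _, _, _, hN⟩ := created3 hm hgv
    have h1 : u ∈ A.Nle v m := ⟨hvu, by omega⟩
    have h2 : u' ∈ A.Nle v m := ⟨hvu', by omega⟩
    rw [hN] at h1 h2
    have e1 : u = t := by
      rcases h1 with h | h | h
      · exact h
      · exact absurd (h ▸ hgu) (by omega)
      · exact absurd (h ▸ hgu) (by omega)
    have e2 : u' = t := by
      rcases h2 with h | h | h
      · exact h
      · exact absurd (h ▸ hgu') (by omega)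
      · exact absurd (h ▸ hgu') (by omega)
    exact huu' (e1.trans e2.symm)
  obtain ⟨hfinU, hcardU⟩ := biUnion_card_aux 2 F hfin
    (fun u hu => (hCu u hu).1) (fun u hu => (hCu u hu).2) hdisj
  rw [hUnion]
  exact ⟨hfinU, hcardU⟩

/-- The number of generation-`m` neighbors of a vertex of generation `≤ m`. -/
lemma neq_card : ∀ m : ℕ, 1 ≤ m → ∀ w : A.Vert, A.gen w ≤ m →
    (A.Neq w m).Finite ∧ (A.Neq w m).ncard =
      (if A.gen w = m then (if m = 1 then 2 else 0)
       else if A.gen w = 1 then 2 ^ (m - 2) else 3 * 2 ^ (m - A.gen w - 1)) := by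
  intro m
  induction m with
  | zero => omega
  | succ m ih =>
    intro _ w hw
    have hg1 := A.gen_pos w
    rcases eq_or_lt_of_le hw with he | hlt
    · -- gen w = m + 1
      rcases eq_or_lt_of_le hg1 with h1 | h1
      · -- gen w = 1, so m = 0
        have hm0 : m = 0 := by omega
        subst hm0
        obtain ⟨hf, hc⟩ := neq_one_card h1.symm
        refine ⟨hf, ?_⟩
        rw [hc, if_pos he, if_pos rfl]
      · -- gen w = m + 1 ≥ 2
        have : A.Neq w (m + 1) = ∅ := neq_self_empty (by omega) he
        rw [this]
        simp only [he, if_pos rfl]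
        have : ¬ (m + 1 = 1) := by omega
        simp [this]
        omega
    · -- gen w ≤ m
      have hwm : A.gen w ≤ m := by omega
      have hne1 : A.gen w ≠ m + 1 := by omega
      rcases eq_or_lt_of_le hwm with he | hlt'
      · -- gen w = m
        rcases Nat.lt_or_ge m 2 with hm1 | hm2
        · -- m = 1
          have hm1' : m = 1 := by omega
          subst hm1'
          obtain ⟨hf, hc⟩ := neq_two_card (by omega : A.gen w = 1)
          refine ⟨hf, ?_⟩
          rw [hc, if_neg hne1, if_pos (by omega : A.gen w = 1)]
          norm_num
        · -- m ≥ 2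
          obtain ⟨hf, hc⟩ := case_top hm2 he
          refine ⟨hf, ?_⟩
          rw [hc, if_neg hne1, if_neg (by omega : ¬ A.gen w = 1), he]
          have : m + 1 - m - 1 = 0 := by omega
          rw [this]
          norm_num
      · -- gen w < m, so m ≥ 2
        have hm2 : 2 ≤ m := by omega
        obtain ⟨hf0, hc0⟩ := ih (by omega) w (by omega)
        rw [if_neg (by omega : ¬ A.gen w = m)] at hc0
        obtain ⟨hf, hc⟩ := case_low hm2 hlt' hf0
        refine ⟨hf, ?_⟩
        rw [hc, hc0, if_neg hne1]
        rcases eq_or_lt_of_le hg1 with h1 | h1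
        · rw [if_pos h1.symm, if_pos h1.symm]
          have : m + 1 - 2 = (m - 2) + 1 := by omega
          rw [this, pow_succ]
          ring
        · rw [if_neg (by omega : ¬ A.gen w = 1), if_neg (by omega : ¬ A.gen w = 1)]
          have : m + 1 - A.gen w - 1 = (m - A.gen w - 1) + 1 := by omega
          rw [this, pow_succ]
          ring

/-- The number of neighbors of generation at most `k` of a vertex of generation `≤ k`. -/
lemma nle_card : ∀ k : ℕ, ∀ w : A.Vert, A.gen w ≤ k →
    (A.Nle w k).Finite ∧ (A.Nle w k).ncard =
      (if A.gen w = 1 then 2 ^ (k - 1) + 1 else 3 * 2 ^ (k - A.gen w)) := by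
  intro k
  induction k with
  | zero => intro w hw; have := A.gen_pos w; omega
  | succ k ih =>
    intro w hw
    have hg1 := A.gen_pos w
    rcases eq_or_lt_of_le hw with he | hlt
    · -- gen w = k + 1 : base case for this vertex
      rcases eq_or_lt_of_le hg1 with h1 | h1
      · -- gen w = 1 = k + 1, so k = 0
        have hk0 : k = 0 := by omega
        subst hk0
        have hset : A.Nle w 1 = A.Neq w 1 := by
          ext z
          simp only [mem_Nle, mem_Neq]
          have := A.gen_pos z
          constructor
          · rintro ⟨h, hz⟩; exact ⟨h, by omega⟩
          · rintro ⟨h, hz⟩; exact ⟨h, by omega⟩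
        obtain ⟨hf, hc⟩ := neq_one_card h1.symm
        refine ⟨hset ▸ hf, ?_⟩
        rw [hset, hc, if_pos h1.symm]
        norm_num
      · -- gen w = k + 1 ≥ 2
        obtain ⟨p, q, s, hgp, hgq, hgs, hpq, hps, hqs, hD⟩ := A.created w (by omega)
        have hset : A.Nle w (k + 1) = {p, q, s} := by
          rw [← hD]
          ext z
          simp only [mem_Nle, Set.mem_setOf_eq, he]
          constructor
          · rintro ⟨hadj, hz⟩
            refine ⟨hadj, ?_⟩
            rcases eq_or_lt_of_le hz with e | l
            · exact absurd (A.adj_gen w z hadj (he.trans e.symm)) (by omega)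
            · omega
          · rintro ⟨hadj, hz⟩
            exact ⟨hadj, by omega⟩
        rw [hset, if_neg (by omega : ¬ A.gen w = 1), he]
        have : k + 1 - (k + 1) = 0 := by omega
        rw [this]
        refine ⟨Set.toFinite _, ?_⟩
        rw [Set.ncard_eq_three.mpr ⟨p, q, s, ne_of_adj hpq, ne_of_adj hps, ne_of_adj hqs, rfl⟩]
        norm_num
    · -- gen w ≤ k : inductive step
      have hwk : A.gen w ≤ k := by omega
      have hk1 : 1 ≤ k := by omega
      have hsplit : A.Nle w (k + 1) = A.Nle w k ∪ A.Neq w (k + 1) := by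
        ext z
        simp only [mem_Nle, mem_Neq, Set.mem_union]
        constructor
        · rintro ⟨h, hz⟩
          rcases Nat.lt_or_ge (A.gen z) (k + 1) with l | l
          · exact Or.inl ⟨h, by omega⟩
          · exact Or.inr ⟨h, by omega⟩
        · rintro (⟨h, hz⟩ | ⟨h, hz⟩) <;> exact ⟨h, by omega⟩
      have hdis : Disjoint (A.Nle w k) (A.Neq w (k + 1)) := by
        rw [Set.disjoint_left]
        rintro z ⟨_, hz⟩ ⟨_, hz'⟩
        omega
      obtain ⟨hf1, hc1⟩ := ih w hwk
      obtain ⟨hf2, hc2⟩ := neq_card (k + 1) (by omega) w (by omega)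
      rw [if_neg (by omega : ¬ A.gen w = k + 1)] at hc2
      refine ⟨by rw [hsplit]; exact hf1.union hf2, ?_⟩
      rw [hsplit, Set.ncard_union_eq hdis hf1 hf2, hc1, hc2]
      rcases eq_or_lt_of_le hg1 with h1 | h1
      · rw [if_pos h1.symm, if_pos h1.symm, if_pos h1.symm]
        have e1 : k + 1 - 2 = k - 1 := by omega
        have e2 : k + 1 - 1 = (k - 1) + 1 := by omega
        rw [e1, e2, pow_succ]
        ring
      · rw [if_neg (by omega : ¬ A.gen w = 1), if_neg (by omega : ¬ A.gen w = 1),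
          if_neg (by omega : ¬ A.gen w = 1)]
        have e1 : k + 1 - A.gen w - 1 = k - A.gen w := by omega
        have e2 : k + 1 - A.gen w = (k - A.gen w) + 1 := by omega
        rw [e1, e2, pow_succ]
        ring

end ApollonianNetwork

theorem stmt13 (A : ApollonianNetwork) (k r : ℕ) (hk : 1 ≤ k) (hr : r ≤ k)
    (v : A.Vert) (hv : A.gen v = r) (hvk : A.gen v ≤ k) :
    ((A.G k).neighborSet ⟨v, hvk⟩).ncard =
      if r = 1 then 2 ^ (k - 1) + 1 else 3 * 2 ^ (k - r) := by
  have himg : Subtype.val '' ((A.G k).neighborSet ⟨v, hvk⟩) = A.Nle v k := by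
    ext z
    constructor
    · rintro ⟨⟨z', hz'⟩, hadj, rfl⟩
      exact ⟨hadj, hz'⟩
    · rintro ⟨hadj, hz⟩
      exact ⟨⟨z, hz⟩, hadj, rfl⟩
  have hcard : ((A.G k).neighborSet ⟨v, hvk⟩).ncard = (A.Nle v k).ncard := by
    rw [← himg, Set.ncard_image_of_injective _ Subtype.val_injective]
  rw [hcard, (ApollonianNetwork.nle_card k v hvk).2, hv]
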